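/- Let n ≥ 5, let i₁ ≠ i₂ be two taxa in {1,…,n}, and set I = {i₁, i₂}. Let T be the tree metric with one internal edge of weight g > 0 separating I from its complement and pendant weights e_i > 0: for i ≠ j, T(i,j) = e_i + e_j + g if exactly one of i, j lies in I, and T(i,j) = e_i + e_j otherwise. Then T is the tropical mixture of two star tree metrics on n taxa if and only if e_{i₁} > g and e_{i₂} > g. -/
import Mathlib


/-- A star tree metric on `n` taxa: a dissimilarity map of the form
`D(i,j) = e i + e j` for `i ≠ j` (and `D(i,i) = 0`) with all pendant weights positive. -/
def IsStarTreeMetric {n : ℕ} (D : Fin n → Fin n → ℝ) : Prop :=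
  ∃ e : Fin n → ℝ, (∀ i, 0 < e i) ∧ (∀ i, D i i = 0) ∧
    ∀ i j, i ≠ j → D i j = e i + e j

/-- `T` is the tropical mixture (pointwise maximum) of two star tree metrics. -/
def IsMixtureOfTwoStars {n : ℕ} (T : Fin n → Fin n → ℝ) : Prop :=
  ∃ D Dbar : Fin n → Fin n → ℝ, IsStarTreeMetric D ∧ IsStarTreeMetric Dbar ∧
    ∀ i j, T i j = max (D i j) (Dbar i j)

/-- The tree metric with one internal edge of weight `g` separating `I` from its
complement, with pendant weights `e`. -/
def oneEdgeMetric {n : ℕ} (I : Finset (Fin n)) (e : Fin n → ℝ) (g : ℝ) :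
    Fin n → Fin n → ℝ :=
  fun i j => if i = j then 0
    else e i + e j + (if (i ∈ I ∧ j ∉ I) ∨ (i ∉ I ∧ j ∈ I) then g else 0)

/-- for `n ≥ 5` and a cherry `I = {i₁, i₂}`, the one-internal-edge
tree metric with weight `g > 0` and pendant weights `e_i > 0` is a tropical
mixture of two star tree metrics iff `e_{i₁} > g` and `e_{i₂} > g`. -/
lemma key_aux {n : ℕ} (e a b : Fin n → ℝ) (g : ℝ) (i₁ i₂ j k l : Fin n)
    (ha2 : 0 < a i₂) (hb2 : 0 < b i₂)
    (hcj : max (a i₁ + a j) (b i₁ + b j) = e i₁ + e j + g)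
    (hck : max (a i₁ + a k) (b i₁ + b k) = e i₁ + e k + g)
    (hcl : max (a i₁ + a l) (b i₁ + b l) = e i₁ + e l + g)
    (hin : max (a i₁ + a i₂) (b i₁ + b i₂) = e i₁ + e i₂)
    (hjk : max (a j + a k) (b j + b k) = e j + e k)
    (hjl : max (a j + a l) (b j + b l) = e j + e l)
    (hkl : max (a k + a l) (b k + b l) = e k + e l) : g < e i₂ := by
  have hajk : a j + a k ≤ e j + e k := hjk ▸ le_max_left _ _
  have hbjk : b j + b k ≤ e j + e k := hjk ▸ le_max_right _ _
  have hajl : a j + a l ≤ e j + e l := hjl ▸ le_max_left _ _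
  have hbjl : b j + b l ≤ e j + e l := hjl ▸ le_max_right _ _
  have hakl : a k + a l ≤ e k + e l := hkl ▸ le_max_left _ _
  have hbkl : b k + b l ≤ e k + e l := hkl ▸ le_max_right _ _
  have hina : a i₁ + a i₂ ≤ e i₁ + e i₂ := hin ▸ le_max_left _ _
  have hinb : b i₁ + b i₂ ≤ e i₁ + e i₂ := hin ▸ le_max_right _ _
  have Hj : a i₁ + a j = e i₁ + e j + g ∨ b i₁ + b j = e i₁ + e j + g := by
    rcases max_choice (a i₁ + a j) (b i₁ + b j) with h | h
    · left; rw [← h, hcj]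
    · right; rw [← h, hcj]
  have Hk : a i₁ + a k = e i₁ + e k + g ∨ b i₁ + b k = e i₁ + e k + g := by
    rcases max_choice (a i₁ + a k) (b i₁ + b k) with h | h
    · left; rw [← h, hck]
    · right; rw [← h, hck]
  have Hl : a i₁ + a l = e i₁ + e l + g ∨ b i₁ + b l = e i₁ + e l + g := by
    rcases max_choice (a i₁ + a l) (b i₁ + b l) with h | h
    · left; rw [← h, hcl]
    · right; rw [← h, hcl]
  rcases Hj with hj' | hj' <;> rcases Hk with hk' | hk' <;> rcases Hl with hl' | hl' <;>
    linarith

theorem cherry_one_edge_is_mixture_iff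
    (n : ℕ) (hn : 5 ≤ n) (i₁ i₂ : Fin n) (hne : i₁ ≠ i₂)
    (e : Fin n → ℝ) (he : ∀ i, 0 < e i) (g : ℝ) (hg : 0 < g) :
    IsMixtureOfTwoStars (oneEdgeMetric {i₁, i₂} e g) ↔
      (g < e i₁ ∧ g < e i₂) := by
  constructor
  · rintro ⟨D, Db, ⟨a, hapos, -, haD⟩, ⟨b, hbpos, -, hbD⟩, hmax⟩
    have hM : ∀ i j, i ≠ j →
        max (a i + a j) (b i + b j) = oneEdgeMetric {i₁, i₂} e g i j := by
      intro i j h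
      rw [← haD i j h, ← hbD i j h, ← hmax i j]
    -- get three elements outside {i₁, i₂}
    have hcard : 2 < (Finset.univ \ {i₁, i₂} : Finset (Fin n)).card := by
      have : (Finset.univ \ {i₁, i₂} : Finset (Fin n)).card = n - 2 := by
        rw [Finset.card_sdiff_of_subset (Finset.subset_univ _), Finset.card_univ,
          Fintype.card_fin, Finset.card_insert_of_notMem (by simp [hne]),
          Finset.card_singleton]
      omega
    obtain ⟨j, k, l, hj, hk, hl, hjk, hjl, hkl⟩ := Finset.two_lt_card_iff.mp hcard
    simp only [Finset.mem_sdiff, Finset.mem_insert, Finset.mem_singleton,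
      Finset.mem_univ, true_and, not_or] at hj hk hl
    obtain ⟨hj1, hj2⟩ := hj
    obtain ⟨hk1, hk2⟩ := hk
    obtain ⟨hl1, hl2⟩ := hl
    have mem1 : i₁ ∈ ({i₁, i₂} : Finset (Fin n)) := by simp
    have mem2 : i₂ ∈ ({i₁, i₂} : Finset (Fin n)) := by simp
    have memout : ∀ u : Fin n, u ≠ i₁ → u ≠ i₂ → u ∉ ({i₁, i₂} : Finset (Fin n)) := by
      intro u h1 h2; simp [h1, h2]
    have hcross : ∀ p ∈ ({i₁, i₂} : Finset (Fin n)), ∀ u : Fin n, u ≠ i₁ → u ≠ i₂ →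
        max (a p + a u) (b p + b u) = e p + e u + g := by
      intro p hp u h1 h2
      have hpu : p ≠ u := by
        rintro rfl
        simp only [Finset.mem_insert, Finset.mem_singleton] at hp
        rcases hp with rfl | rfl
        exacts [h1 rfl, h2 rfl]
      rw [hM p u hpu]
      simp [oneEdgeMetric, hpu, hp, memout u h1 h2]
    have hout : ∀ u v : Fin n, u ≠ v → u ≠ i₁ → u ≠ i₂ → v ≠ i₁ → v ≠ i₂ →
        max (a u + a v) (b u + b v) = e u + e v := by
      intro u v huv hu1 hu2 hv1 hv2
      rw [hM u v huv]
      simp [oneEdgeMetric, huv, memout u hu1 hu2, memout v hv1 hv2]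
    have hin12 : max (a i₁ + a i₂) (b i₁ + b i₂) = e i₁ + e i₂ := by
      rw [hM i₁ i₂ hne]
      simp [oneEdgeMetric, hne, mem1, mem2]
    have hin21 : max (a i₂ + a i₁) (b i₂ + b i₁) = e i₂ + e i₁ := by
      rw [hM i₂ i₁ hne.symm]
      simp [oneEdgeMetric, hne.symm, mem1, mem2]
    refine ⟨?_, ?_⟩
    · exact key_aux e a b g i₂ i₁ j k l (hapos i₁) (hbpos i₁)
        (hcross i₂ mem2 j hj1 hj2) (hcross i₂ mem2 k hk1 hk2)
        (hcross i₂ mem2 l hl1 hl2) hin21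
        (hout j k hjk hj1 hj2 hk1 hk2) (hout j l hjl hj1 hj2 hl1 hl2)
        (hout k l hkl hk1 hk2 hl1 hl2)
    · exact key_aux e a b g i₁ i₂ j k l (hapos i₂) (hbpos i₂)
        (hcross i₁ mem1 j hj1 hj2) (hcross i₁ mem1 k hk1 hk2)
        (hcross i₁ mem1 l hl1 hl2) hin12
        (hout j k hjk hj1 hj2 hk1 hk2) (hout j l hjl hj1 hj2 hl1 hl2)
        (hout k l hkl hk1 hk2 hl1 hl2)
  · rintro ⟨h1, h2⟩
    set a : Fin n → ℝ := fun i => if i = i₁ then e i₁ + g else if i = i₂ then e i₂ - g else e i with ha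
    set b : Fin n → ℝ := fun i => if i = i₁ then e i₁ - g else if i = i₂ then e i₂ + g else e i with hb
    refine ⟨fun i j => if i = j then 0 else a i + a j,
      fun i j => if i = j then 0 else b i + b j,
      ⟨a, ?_, by simp, fun i j h => by simp [h]⟩,
      ⟨b, ?_, by simp, fun i j h => by simp [h]⟩, ?_⟩
    · intro i
      simp only [ha]
      split_ifs <;> [linarith; linarith [he i₂]; exact he i]
    · intro i
      simp only [hb]
      split_ifs <;> [linarith [he i₁]; linarith; exact he i]
    · intro i j
      by_cases hij : i = j
      · simp [oneEdgeMetric, hij]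
      · simp only [oneEdgeMetric, if_neg hij]
        by_cases hi1 : i = i₁ <;> by_cases hi2 : i = i₂ <;>
          by_cases hj1 : j = i₁ <;> by_cases hj2 : j = i₂ <;>
          subst_vars <;> try contradiction
        all_goals simp [ha, hb, Finset.mem_insert, Finset.mem_singleton, hne, hne.symm, *]
        all_goals first
          | (rw [max_eq_left (by linarith)]; ring)
          | (rw [max_eq_right (by linarith)]; ring)
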